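/- Let λ* = (λ₁*,…,λ₆*) ∈ ℝ⁶ satisfy λ₁* = λ₂* = λ₅* = λ₆* = 0, λ₄* = −5λ₃*, and λ₃* ≠ 0 (i.e. λ* is a nonzero point of the branch {λ₆ = 0} of I₂ ∩ I₄). Then the ideal of ℝ[λ₁,…,λ₆] generated by the Kapteyn–Bautin polynomials v₁, v₂, v₃, v₄ and the ideal generated by λ₁, λ₅, λ₂(λ₄+5λ₃−5λ₆), λ₂(λ₃λ₆−2λ₆²−λ₂²) coincide locally at λ*. -/

import Mathlib

open MvPolynomial

/-- The multiplicative set of polynomials not vanishing at `p`, i.e. the complement of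
the maximal ideal of polynomials vanishing at `p`. -/
def nonVanishing (K : Type*) [Field K] (p : Fin 6 → K) :
    Submonoid (MvPolynomial (Fin 6) K) where
  carrier := {f | eval p f ≠ 0}
  mul_mem' := by
    intro a b ha hb
    simp only [Set.mem_setOf_eq, map_mul] at ha hb ⊢
    exact mul_ne_zero ha hb
  one_mem' := by simp

/-- Two ideals of `K[λ₁,…,λ₆]` coincide locally at `p` if their extensions to the
localization of the polynomial ring at the maximal ideal of polynomials vanishing at `p`
(equivalently, the localization inverting all polynomials not vanishing at `p`) are equal. -/
def coincideLocally (K : Type*) [Field K] (p : Fin 6 → K)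
    (I J : Ideal (MvPolynomial (Fin 6) K)) : Prop :=
  Ideal.map (algebraMap (MvPolynomial (Fin 6) K) (Localization (nonVanishing K p))) I =
  Ideal.map (algebraMap (MvPolynomial (Fin 6) K) (Localization (nonVanishing K p))) J

/-- The Bautin ideal of the Kapteyn normal form, generated by the Kapteyn–Bautin
polynomials `v₁ = λ₁`, `v₂ = λ₅(λ₃−λ₆)`, `v₃ = λ₂λ₄(λ₃−λ₆)(λ₄+5λ₃−5λ₆)`,
`v₄ = λ₂λ₄(λ₃−λ₆)²(λ₃λ₆−2λ₆²−λ₂²)`, where `X 0 = λ₁, …, X 5 = λ₆`. -/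
noncomputable def bautinIdeal (K : Type*) [Field K] : Ideal (MvPolynomial (Fin 6) K) :=
  Ideal.span {X 0, X 4 * (X 2 - X 5),
    X 1 * X 3 * (X 2 - X 5) * (X 3 + 5 * X 2 - 5 * X 5),
    X 1 * X 3 * (X 2 - X 5) ^ 2 * (X 2 * X 5 - 2 * X 5 ^ 2 - X 1 ^ 2)}

/-- at a nonzero point `λ*` of the branch `{λ₆ = 0}` of `I₂ ∩ I₄`
(`λ₁* = λ₂* = λ₅* = λ₆* = 0`, `λ₄* = −5λ₃*`, `λ₃* ≠ 0`, base field `ℝ`), the Bautin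
ideal coincides locally at `λ*` with the ideal
`(λ₁, λ₅, λ₂(λ₄+5λ₃−5λ₆), λ₂(λ₃λ₆−2λ₆²−λ₂²))`. -/
private lemma unit_cancel {R : Type*} [CommRing R] {I : Ideal R} {u b : R}
    (hu : IsUnit u) (h : u * b ∈ I) : b ∈ I := by
  obtain ⟨v, rfl⟩ := hu
  simpa using I.mul_mem_left (↑v⁻¹) h

set_option maxHeartbeats 1000000 in
theorem stmt_11 (l1 l2 l3 l4 l5 l6 : ℝ)
    (h1 : l1 = 0) (h2 : l2 = 0) (h5 : l5 = 0) (h6 : l6 = 0)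
    (h4 : l4 = -5 * l3) (h3 : l3 ≠ 0) :
    coincideLocally ℝ ![l1, l2, l3, l4, l5, l6]
      (bautinIdeal ℝ)
      (Ideal.span {X 0, X 4, X 1 * (X 3 + 5 * X 2 - 5 * X 5),
        X 1 * (X 2 * X 5 - 2 * X 5 ^ 2 - X 1 ^ 2)}) := by
  subst h1 h2 h5 h6 h4
  set p : Fin 6 → ℝ := ![0, 0, l3, -5 * l3, 0, 0] with hp
  set φ := algebraMap (MvPolynomial (Fin 6) ℝ) (Localization (nonVanishing ℝ p)) with hφ
  have hmemS : ∀ f : MvPolynomial (Fin 6) ℝ, eval p f ≠ 0 → f ∈ nonVanishing ℝ p :=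
    fun f hf => hf
  have e1 : eval p (X 2 - X 5) = l3 := by
    rw [map_sub, eval_X, eval_X, show p 2 = l3 from rfl, show p 5 = 0 from rfl, sub_zero]
  have e2 : eval p (X 3 : MvPolynomial (Fin 6) ℝ) = -5 * l3 := by
    rw [eval_X]; rfl
  have hu1 : IsUnit (φ (X 2 - X 5)) :=
    IsLocalization.map_units (Localization (nonVanishing ℝ p))
      (⟨X 2 - X 5, hmemS _ (by rw [e1]; exact h3)⟩ : nonVanishing ℝ p)
  have hu2 : IsUnit (φ (X 3)) :=
    IsLocalization.map_units (Localization (nonVanishing ℝ p))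
      (⟨X 3, hmemS _ (by rw [e2]; exact mul_ne_zero (by norm_num) h3)⟩ : nonVanishing ℝ p)
  unfold coincideLocally bautinIdeal
  rw [Ideal.map_span, Ideal.map_span, ← hφ]
  simp only [Set.image_insert_eq, Set.image_singleton]
  have m1 : ∀ (a b c d : Localization (nonVanishing ℝ p)),
      a ∈ ({a, b, c, d} : Set _) := fun a b c d => Set.mem_insert _ _
  have m2 : ∀ (a b c d : Localization (nonVanishing ℝ p)),
      b ∈ ({a, b, c, d} : Set _) := fun a b c d =>
    Set.mem_insert_iff.2 (Or.inr (Set.mem_insert _ _))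
  have m3 : ∀ (a b c d : Localization (nonVanishing ℝ p)),
      c ∈ ({a, b, c, d} : Set _) := fun a b c d =>
    Set.mem_insert_iff.2 (Or.inr (Set.mem_insert_iff.2 (Or.inr (Set.mem_insert _ _))))
  have m4 : ∀ (a b c d : Localization (nonVanishing ℝ p)),
      d ∈ ({a, b, c, d} : Set _) := fun a b c d =>
    Set.mem_insert_iff.2 (Or.inr (Set.mem_insert_iff.2 (Or.inr (Set.mem_insert_iff.2
      (Or.inr rfl)))))
  apply le_antisymm <;> rw [Ideal.span_le] <;>
    refine Set.insert_subset_iff.2 ⟨?_, Set.insert_subset_iff.2 ⟨?_, Set.insert_subset_iff.2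
      ⟨?_, Set.singleton_subset_iff.2 ?_⟩⟩⟩
  · exact Ideal.subset_span (m1 _ _ _ _)
  · have heq : φ (X 4 * (X 2 - X 5)) = φ (X 4) * φ (X 2 - X 5) := map_mul φ _ _
    rw [heq]
    exact Ideal.mul_mem_right _ _ (Ideal.subset_span (m2 _ _ _ _))
  · have heq : φ (X 1 * X 3 * (X 2 - X 5) * (X 3 + 5 * X 2 - 5 * X 5))
        = φ (X 1 * (X 3 + 5 * X 2 - 5 * X 5)) * φ (X 3 * (X 2 - X 5)) := by
      rw [← map_mul]; exact congrArg φ (by ring)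
    rw [heq]
    exact Ideal.mul_mem_right _ _ (Ideal.subset_span (m3 _ _ _ _))
  · have heq : φ (X 1 * X 3 * (X 2 - X 5) ^ 2 * (X 2 * X 5 - 2 * X 5 ^ 2 - X 1 ^ 2))
        = φ (X 1 * (X 2 * X 5 - 2 * X 5 ^ 2 - X 1 ^ 2)) * φ (X 3 * (X 2 - X 5) ^ 2) := by
      rw [← map_mul]; exact congrArg φ (by ring)
    rw [heq]
    exact Ideal.mul_mem_right _ _ (Ideal.subset_span (m4 _ _ _ _))
  · exact Ideal.subset_span (m1 _ _ _ _)
  · refine unit_cancel hu1 ?_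
    have heq : φ (X 2 - X 5) * φ (X 4) = φ (X 4 * (X 2 - X 5)) := by
      rw [← map_mul]; exact congrArg φ (by ring)
    rw [heq]
    exact Ideal.subset_span (m2 _ _ _ _)
  · refine unit_cancel (hu2.mul hu1) ?_
    have heq : φ (X 3) * φ (X 2 - X 5) * φ (X 1 * (X 3 + 5 * X 2 - 5 * X 5))
        = φ (X 1 * X 3 * (X 2 - X 5) * (X 3 + 5 * X 2 - 5 * X 5)) := by
      rw [← map_mul, ← map_mul]; exact congrArg φ (by ring)
    rw [heq]
    exact Ideal.subset_span (m3 _ _ _ _)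
  · refine unit_cancel (hu2.mul (hu1.pow 2)) ?_
    have heq : φ (X 3) * φ (X 2 - X 5) ^ 2 * φ (X 1 * (X 2 * X 5 - 2 * X 5 ^ 2 - X 1 ^ 2))
        = φ (X 1 * X 3 * (X 2 - X 5) ^ 2 * (X 2 * X 5 - 2 * X 5 ^ 2 - X 1 ^ 2)) := by
      rw [← map_pow, ← map_mul, ← map_mul]; exact congrArg φ (by ring)
    rw [heq]
    exact Ideal.subset_span (m4 _ _ _ _)
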